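/- arXiv:1608.00171 — 5 statements merged into one kernel-verified Lean document; each statement's English description precedes it below -/
import Mathlib

section
/- Let R be a commutative ring with total quotient ring T(R), and let r ∈ R. The canonical ring homomorphism R[ρ] → T(R)[ρ] induced by R → T(R) (where T(R)[ρ] = T(R)[T]/(T(T−r))) exhibits T(R)[ρ] as the total quotient ring of R[ρ]; that is, T(R)[ρ] is the localization of R[ρ] at the multiplicative set of non-zerodivisors of R[ρ]. -/
open Polynomial

/-- The ring `S[ρ] = S[T]/(T(T−s))`. -/
abbrev RhoRing (S : Type*) [CommRing S] (s : S) : Type _ :=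
  Polynomial S ⧸ Ideal.span {(X * (X - Polynomial.C s) : Polynomial S)}
open Polynomial

namespace RhoAux
variable {S : Type*} [CommRing S] (s : S)

noncomputable abbrev f (s : S) : S[X] := X * (X - C s)

lemma monic_f : (f s).Monic := monic_X.mul (monic_X_sub_C s)

lemma degree_f [Nontrivial S] : (f s).degree = 2 := by
  rw [(monic_X_sub_C s).degree_mul, degree_X, degree_X_sub_C]; rfl

lemma wb_le_one {x : WithBot ℕ} (h : x < 2) : x ≤ 1 := by
  cases x with
  | bot => exact bot_le
  | coe n =>
    rw [show (2:WithBot ℕ) = ((2:ℕ):WithBot ℕ) from rfl] at h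
    rw [show (1:WithBot ℕ) = ((1:ℕ):WithBot ℕ) from rfl]
    exact WithBot.coe_le_coe.2 (Nat.lt_succ_iff.mp (WithBot.coe_lt_coe.1 h))

lemma eq_zero_of_dvd (q : S[X]) (h : f s ∣ q) (hd : q.degree < 2) : q = 0 := by
  nontriviality S
  rw [← (Polynomial.modByMonic_eq_zero_iff_dvd (monic_f s))] at h
  rwa [(Polynomial.modByMonic_eq_self_iff (monic_f s)).2 (degree_f s ▸ hd)] at h

lemma rep [Nontrivial S] (z : S[X] ⧸ Ideal.span {f s}) :
    ∃ a b : S, z = Ideal.Quotient.mk _ (C a + C b * X) := by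
  obtain ⟨p, rfl⟩ := Ideal.Quotient.mk_surjective z
  refine ⟨(p %ₘ f s).coeff 0, (p %ₘ f s).coeff 1, ?_⟩
  rw [Ideal.Quotient.mk_eq_mk_iff_sub_mem, Ideal.mem_span_singleton]
  have hd : (p %ₘ f s).degree ≤ 1 :=
    wb_le_one (degree_f s ▸ degree_modByMonic_lt p (monic_f s))
  have hrep : p %ₘ f s = C ((p %ₘ f s).coeff 1) * X + C ((p %ₘ f s).coeff 0) :=
    eq_X_add_C_of_degree_le_one hd
  have := modByMonic_add_div p (f s)
  exact ⟨p /ₘ f s, by linear_combination (norm := ring_nf) -this + hrep⟩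

lemma mul_formula (a b c d : S) :
    (Ideal.Quotient.mk (Ideal.span {f s}) (C a + C b * X)) *
      (Ideal.Quotient.mk _ (C c + C d * X)) =
    Ideal.Quotient.mk _ (C (a*c) + C (a*d + b*c + s*b*d) * X) := by
  rw [← map_mul, Ideal.Quotient.mk_eq_mk_iff_sub_mem, Ideal.mem_span_singleton]
  exact ⟨C b * C d, by simp only [f, C_add, C_mul]; ring⟩

lemma lin_eq_zero [Nontrivial S] {a b : S}
    (h : Ideal.Quotient.mk (Ideal.span {f s}) (C a + C b * X) = 0) : a = 0 ∧ b = 0 := by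
  rw [Ideal.Quotient.eq_zero_iff_mem, Ideal.mem_span_singleton] at h
  have hdeg : (C a + C b * X : S[X]).degree ≤ 1 := by compute_degree
  have h0 : (C a + C b * X : S[X]) = 0 :=
    eq_zero_of_dvd s _ h (lt_of_le_of_lt hdeg (by decide))
  constructor
  · have := congrArg (fun p => Polynomial.coeff p 0) h0; simpa using this
  · have := congrArg (fun p => Polynomial.coeff p 1) h0; simpa using this



-- constant nonzerodivisor kills
lemma const_nzd_mul_eq_zero [Nontrivial S] {n : S} (hn : n ∈ nonZeroDivisors S)
    {w : S[X] ⧸ Ideal.span {f s}} (hw : Ideal.Quotient.mk _ (C n) * w = 0) : w = 0 := by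
  obtain ⟨c, d, rfl⟩ := rep s w
  have hrw : Ideal.Quotient.mk (Ideal.span {f s}) (C n) =
      Ideal.Quotient.mk _ (C n + C 0 * X) := by rw [map_zero, zero_mul, add_zero]
  rw [hrw, mul_formula] at hw
  rw [show n * d + 0 * c + s * 0 * d = n * d by ring] at hw
  have h2 := lin_eq_zero s hw
  have hc : c = 0 := (mem_nonZeroDivisors_iff_right.1 hn) _ (by rw [mul_comm]; exact h2.1)
  have hd : d = 0 := (mem_nonZeroDivisors_iff_right.1 hn) _ (by rw [mul_comm]; exact h2.2)
  rw [hc, hd]; simp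

lemma norm_nzd_imp [Nontrivial S] {a b : S} (h : a * (a + s * b) ∈ nonZeroDivisors S) :
    Ideal.Quotient.mk (Ideal.span {f s}) (C a + C b * X) ∈
      nonZeroDivisors (S[X] ⧸ Ideal.span {f s}) := by
  rw [mem_nonZeroDivisors_iff_right]
  intro w hw
  have hz : (Ideal.Quotient.mk (Ideal.span {f s}) (C a + C b * X)) * w = 0 := by
    rwa [mul_comm] at hw
  have key : (Ideal.Quotient.mk (Ideal.span {f s}) (C (a + s*b) + C (-b) * X)) *
      (Ideal.Quotient.mk _ (C a + C b * X)) =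
      Ideal.Quotient.mk _ (C (a * (a + s*b))) := by
    rw [mul_formula]
    rw [show (a + s*b) * b + -b * a + s * -b * b = 0 by ring]
    rw [show (a + s*b) * a = a * (a + s*b) by ring]
    simp
  have hfin : Ideal.Quotient.mk (Ideal.span {f s}) (C (a * (a + s*b))) * w = 0 := by
    rw [← key, mul_assoc, hz, mul_zero]
  exact const_nzd_mul_eq_zero s h hfin

lemma nzd_imp_norm [Nontrivial S] {a b : S}
    (h : Ideal.Quotient.mk (Ideal.span {f s}) (C a + C b * X) ∈
      nonZeroDivisors (S[X] ⧸ Ideal.span {f s})) :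
    a * (a + s * b) ∈ nonZeroDivisors S := by
  rw [mem_nonZeroDivisors_iff_right]
  intro x hx
  have key : (Ideal.Quotient.mk (Ideal.span {f s}) (C ((a + s*b)*x) + C (-(b*x)) * X)) *
      (Ideal.Quotient.mk _ (C a + C b * X)) = 0 := by
    rw [mul_formula]
    rw [show (a + s*b)*x * a = x * (a * (a + s*b)) by ring, hx]
    rw [show (a + s*b)*x * b + -(b*x) * a + s * -(b*x) * b = 0 by ring]
    simp
  have h1 := lin_eq_zero s ((mem_nonZeroDivisors_iff_right.1 h) _ key)
  have hbx : b * x = 0 := by linear_combination -h1.2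
  have hax : a * x = 0 := by linear_combination h1.1 - s * hbx
  have key2 : (Ideal.Quotient.mk (Ideal.span {f s}) (C x + C 0 * X)) *
      (Ideal.Quotient.mk _ (C a + C b * X)) = 0 := by
    rw [mul_formula]
    rw [show x * a = 0 by linear_combination hax]
    rw [show x * b + 0 * a + s * 0 * b = 0 by linear_combination hbx]
    simp
  have hx0 := lin_eq_zero s ((mem_nonZeroDivisors_iff_right.1 h) _ key2)
  exact hx0.1


lemma conj_mul (a b : S) :
    (Ideal.Quotient.mk (Ideal.span {f s}) (C (a + s*b) + C (-b) * X)) *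
      (Ideal.Quotient.mk _ (C a + C b * X)) =
      Ideal.Quotient.mk _ (C (a * (a + s*b))) := by
  rw [mul_formula]
  rw [show (a + s*b) * b + -b * a + s * -b * b = 0 by ring]
  rw [show (a + s*b) * a = a * (a + s*b) by ring]
  simp

end RhoAux

open RhoAux in
theorem rhoRing_totalQuotientRing' (R : Type*) [CommRing R] (r : R) :
    ∃ φ : (Polynomial R ⧸ Ideal.span {(X * (X - Polynomial.C r) : Polynomial R)}) →+*
        (Polynomial (FractionRing R) ⧸ Ideal.span {(X * (X - Polynomial.C (algebraMap R (FractionRing R) r)) : Polynomial (FractionRing R))}),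
      (∀ p : Polynomial R,
        φ (Ideal.Quotient.mk _ p) =
          Ideal.Quotient.mk _ (p.map (algebraMap R (FractionRing R)))) ∧
      Function.Injective φ ∧
      (∀ z ∈ nonZeroDivisors (Polynomial R ⧸ Ideal.span {(X * (X - Polynomial.C r) : Polynomial R)}), IsUnit (φ z)) ∧
      (∀ w : (Polynomial (FractionRing R) ⧸ Ideal.span {(X * (X - Polynomial.C (algebraMap R (FractionRing R) r)) : Polynomial (FractionRing R))}),
        ∃ z, ∃ u ∈ nonZeroDivisors (Polynomial R ⧸ Ideal.span {(X * (X - Polynomial.C r) : Polynomial R)}), w * φ u = φ z) := by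
  set K := FractionRing R
  set g : R →+* K := algebraMap R K with hg
  have hsubq : ∀ (S : Type _) [CommRing S] [Subsingleton S] (I : Ideal (Polynomial S)),
      Subsingleton (Polynomial S ⧸ I) := by
    intro S _ _ I
    haveI : Subsingleton (Polynomial S) := ⟨fun p q => Polynomial.ext fun n => Subsingleton.elim _ _⟩
    exact ⟨fun x y => by
      obtain ⟨p, rfl⟩ := Ideal.Quotient.mk_surjective x
      obtain ⟨q, rfl⟩ := Ideal.Quotient.mk_surjective y
      rw [Subsingleton.elim p q]⟩
  have hsubK : Subsingleton R → Subsingleton K := fun hR =>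
    subsingleton_of_zero_eq_one (by rw [← map_zero g, ← map_one g, Subsingleton.elim (0:R) (1:R)])
  have hfmap : (f r).map g = f (g r) := by
    simp [f, Polynomial.map_mul, Polynomial.map_sub]
  have hmaplin : ∀ a b : R, (C a + C b * X).map g = C (g a) + C (g b) * X := by
    intro a b; simp
  have h0 : ∀ p ∈ Ideal.span {f r},
      ((Ideal.Quotient.mk (Ideal.span {f (g r)})).comp (mapRingHom g)) p = 0 := by
    intro p hp
    rw [Ideal.mem_span_singleton] at hp
    simp only [RingHom.comp_apply, coe_mapRingHom]
    rw [Ideal.Quotient.eq_zero_iff_mem, Ideal.mem_span_singleton]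
    exact hfmap ▸ Polynomial.map_dvd g hp
  refine ⟨Ideal.Quotient.lift _ ((Ideal.Quotient.mk (Ideal.span {f (g r)})).comp (mapRingHom g)) h0,
    fun p => rfl, ?_, ?_, ?_⟩
  · -- injectivity
    rcases subsingleton_or_nontrivial R with hR | hR
    · haveI := hsubq R (Ideal.span {f r})
      intro x y _; exact Subsingleton.elim x y
    · haveI : Nontrivial K :=
        ⟨⟨0, 1, fun h => zero_ne_one (IsFractionRing.injective R K
          (by rw [map_zero, map_one]; exact h))⟩⟩
      rw [injective_iff_map_eq_zero]
      intro z hz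
      obtain ⟨a, b, rfl⟩ := rep r z
      rw [Ideal.Quotient.lift_mk, RingHom.comp_apply, coe_mapRingHom, hmaplin] at hz
      have h2 := lin_eq_zero (g r) hz
      have ha : a = 0 := IsFractionRing.injective R K (by rw [map_zero]; exact h2.1)
      have hb : b = 0 := IsFractionRing.injective R K (by rw [map_zero]; exact h2.2)
      rw [ha, hb]; simp
  · -- nzd → unit
    rcases subsingleton_or_nontrivial R with hR | hR
    · haveI := hsubK hR
      haveI := hsubq K (Ideal.span {f (g r)})
      intro z _; exact isUnit_of_subsingleton _
    · haveI : Nontrivial K :=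
        ⟨⟨0, 1, fun h => zero_ne_one (IsFractionRing.injective R K
          (by rw [map_zero, map_one]; exact h))⟩⟩
      intro z hz
      obtain ⟨a, b, rfl⟩ := rep r z
      have hN := nzd_imp_norm r hz
      have uN : IsUnit (g (a * (a + r*b))) := IsLocalization.map_units K ⟨_, hN⟩
      have hφ : (Ideal.Quotient.lift _ ((Ideal.Quotient.mk (Ideal.span {f (g r)})).comp (mapRingHom g)) h0)
          (Ideal.Quotient.mk _ (C a + C b * X)) =
          Ideal.Quotient.mk _ (C (g a) + C (g b) * X) := by
        rw [Ideal.Quotient.lift_mk, RingHom.comp_apply, coe_mapRingHom, hmaplin]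
      rw [hφ]
      have key := conj_mul (g r) (g a) (g b)
      have hrwN : g a * (g a + g r * g b) = g (a * (a + r*b)) := by
        rw [map_mul, map_add, map_mul]
      rw [hrwN] at key
      have hu2 : IsUnit (Ideal.Quotient.mk (Ideal.span {f (g r)}) (C (g (a*(a+r*b))))) :=
        uN.map ((Ideal.Quotient.mk (Ideal.span {f (g r)})).comp Polynomial.C)
      rw [← key] at hu2
      obtain ⟨v, hv⟩ := hu2.exists_left_inv
      exact ⟨⟨_, v * Ideal.Quotient.mk (Ideal.span {f (g r)}) (C (g a + g r * g b) + C (-g b) * X), by rw [← hv]; ring, by rw [← hv]; ring⟩, rfl⟩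
  · -- fourth part
    rcases subsingleton_or_nontrivial R with hR | hR
    · haveI := hsubK hR
      haveI := hsubq K (Ideal.span {f (g r)})
      intro w
      exact ⟨0, 1, one_mem _, Subsingleton.elim _ _⟩
    · haveI : Nontrivial K :=
        ⟨⟨0, 1, fun h => zero_ne_one (IsFractionRing.injective R K
          (by rw [map_zero, map_one]; exact h))⟩⟩
      intro w
      obtain ⟨α, β, rfl⟩ := rep (g r) w
      obtain ⟨⟨a, s0⟩, hs⟩ := IsLocalization.surj (nonZeroDivisors R) α
      obtain ⟨⟨b, t0⟩, ht⟩ := IsLocalization.surj (nonZeroDivisors R) β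
      simp only at hs ht
      set u : R := (s0 : R) * (t0 : R) with hu
      have hunzd : Ideal.Quotient.mk (Ideal.span {f r}) (C u + C 0 * X) ∈
          nonZeroDivisors (R[X] ⧸ Ideal.span {f r}) := by
        apply norm_nzd_imp
        rw [show u * (u + r * 0) = u * u by ring]
        exact mul_mem (mul_mem s0.2 t0.2) (mul_mem s0.2 t0.2)
      refine ⟨Ideal.Quotient.mk _ (C (a * (t0:R)) + C ((s0:R) * b) * X),
        Ideal.Quotient.mk _ (C u + C 0 * X), hunzd, ?_⟩
      simp only [Ideal.Quotient.lift_mk, RingHom.comp_apply, coe_mapRingHom, hmaplin]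
      rw [mul_formula]
      have e1 : α * g u = g (a * (t0:R)) := by
        rw [hu, map_mul, map_mul]
        linear_combination (g (t0:R)) * hs
      have e2 : α * g 0 + β * g u + g r * β * g 0 = g ((s0:R) * b) := by
        rw [hu, map_mul, map_mul, map_zero]
        linear_combination (g (s0:R)) * ht
      rw [e1, e2]


/-- The total quotient ring of `R[ρ] = R[T]/(T(T−r))` is
`T(R)[ρ] = T(R)[T]/(T(T−r))`: the canonical ring homomorphism `R[ρ] → T(R)[ρ]` induced
by the localization map `R → T(R)` is injective, sends every non-zerodivisor of `R[ρ]`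
to a unit, and every element of `T(R)[ρ]` is a quotient of an element of `R[ρ]` by a
non-zerodivisor of `R[ρ]`. -/
theorem rhoRing_totalQuotientRing (R : Type*) [CommRing R] (r : R) :
    ∃ φ : RhoRing R r →+* RhoRing (FractionRing R) (algebraMap R (FractionRing R) r),
      (∀ p : Polynomial R,
        φ (Ideal.Quotient.mk _ p) =
          Ideal.Quotient.mk _ (p.map (algebraMap R (FractionRing R)))) ∧
      Function.Injective φ ∧
      (∀ z ∈ nonZeroDivisors (RhoRing R r), IsUnit (φ z)) ∧
      (∀ w : RhoRing (FractionRing R) (algebraMap R (FractionRing R) r),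
        ∃ z : RhoRing R r, ∃ u ∈ nonZeroDivisors (RhoRing R r), w * φ u = φ z) :=
  rhoRing_totalQuotientRing' R r
end

section
/- Let R be a commutative ring with total quotient ring K = T(R), and let r ∈ R. For all f, g ∈ K[X], the polynomial F = f̄ + ḡ·ρ ∈ K[ρ][X] (where K[ρ] = K[T]/(T(T−r)) contains R[ρ] as a subring) satisfies F(z) ∈ R[ρ] for all z ∈ R[ρ] if and only if f ∈ Int(R; r) and g ∈ Int(R). That is, Int(R[ρ]) = Int(R; r) + Int(R)·ρ. -/
open Polynomial

/-- `IsDeltaWitness f G` says that `G = G(X,Y) ∈ S[X][Y]` is the (unique) two-variable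
polynomial with `f(X+Y) − f(X) = Y·G(X,Y)`; then `Δ_c f = G(X,c)` for `c ∈ S`. -/
def IsDeltaWitness {S : Type*} [CommRing S] (f : Polynomial S)
    (G : Polynomial (Polynomial S)) : Prop :=
  f.eval₂ (Polynomial.C.comp Polynomial.C) (Polynomial.C X + X) = Polynomial.C f + X * G

/-- The set `Int(R)` of integer-valued polynomials on `R`, over `K = T(R) = FractionRing R`. -/
def IntPoly (R : Type*) [CommRing R] : Set (Polynomial (FractionRing R)) :=
  {f | ∀ a : R, f.eval (algebraMap R (FractionRing R) a) ∈ Set.range (algebraMap R (FractionRing R))}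

/-- The set `Int(R; r) = {f ∈ Int(R) : y·Δ_{yr}f ∈ Int(R) for all y ∈ R}`. -/
def IntPolyRho (R : Type*) [CommRing R] (r : R) : Set (Polynomial (FractionRing R)) :=
  {f | f ∈ IntPoly R ∧ ∀ y : R, ∀ G, IsDeltaWitness f G →
    Polynomial.C (algebraMap R (FractionRing R) y) *
      G.eval (Polynomial.C (algebraMap R (FractionRing R) (y * r))) ∈ IntPoly R}

/-- The subring `R[ρ]` of `K[ρ]`, `K = T(R)`: the image of `R[T]`. -/
noncomputable def RhoBase (R : Type*) [CommRing R] (r : R) :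
    Subring (RhoRing (FractionRing R) (algebraMap R (FractionRing R) r)) :=
  ((Ideal.Quotient.mk _ :
      Polynomial (FractionRing R) →+*
        RhoRing (FractionRing R) (algebraMap R (FractionRing R) r)).comp
    (mapRingHom (algebraMap R (FractionRing R)))).range

section Aux

variable {S : Type*} [CommRing S]

/-- The canonical delta witness: `(f(X+Y) - f(X)).divX` in the `Y` variable. -/
noncomputable def deltaW (f : S[X]) : Polynomial (S[X]) :=
  (f.eval₂ (C.comp C) (Polynomial.C X + X) - Polynomial.C f).divX

lemma eval_zero_shift (f : S[X]) :
    eval 0 (f.eval₂ (C.comp C) (Polynomial.C X + X)) = f := by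
  have h := hom_eval₂ f ((C : S[X] →+* S[X][X]).comp (C : S →+* S[X]))
      (evalRingHom (0 : S[X])) (Polynomial.C X + X)
  have hc : (evalRingHom (0 : S[X])).comp ((C : S[X] →+* S[X][X]).comp (C : S →+* S[X]))
      = (C : S →+* S[X]) := by ext s; simp
  rw [hc] at h
  simpa using h

lemma deltaW_spec (f : S[X]) : IsDeltaWitness f (deltaW f) := by
  unfold IsDeltaWitness deltaW
  have h0 : (f.eval₂ (C.comp C) (Polynomial.C X + X) - Polynomial.C f).coeff 0 = 0 := by
    rw [coeff_zero_eq_eval_zero, eval_sub, eval_C, eval_zero_shift f, sub_self]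
  have h := divX_mul_X_add (f.eval₂ (C.comp C) (Polynomial.C X + X) - Polynomial.C f)
  rw [h0, map_zero, add_zero] at h
  linear_combination -h

lemma deltaW_unique {f : S[X]} {G G' : Polynomial (S[X])}
    (h : IsDeltaWitness f G) (h' : IsDeltaWitness f G') : G = G' := by
  unfold IsDeltaWitness at h h'
  have hx : X * G = X * G' := by linear_combination h' - h
  refine Polynomial.ext fun n => ?_
  have := congrArg (fun p => coeff p (n+1)) hx
  simpa [coeff_X_mul] using this

lemma shift_eval {f : S[X]} {G : Polynomial (S[X])} (h : IsDeltaWitness f G) (a c : S) :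
    f.eval (a + c) = f.eval a + c * ((G.eval (Polynomial.C c)).eval a) := by
  have h2 := congrArg (eval₂RingHom (evalRingHom a) c) h
  rw [hom_eval₂ f ((C : S[X] →+* S[X][X]).comp (C : S →+* S[X]))
      (eval₂RingHom (evalRingHom a) c) (Polynomial.C X + X)] at h2
  have hc : (eval₂RingHom (evalRingHom a) c).comp ((C : S[X] →+* S[X][X]).comp (C : S →+* S[X]))
      = RingHom.id S := by ext s; simp
  rw [hc] at h2
  have hG : eval₂ (evalRingHom a) c G = (G.eval (Polynomial.C c)).eval a := by
    have h3 := hom_eval₂ G (RingHom.id (S[X])) (evalRingHom a) (Polynomial.C c)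
    simpa using h3.symm
  simp [eval₂_add, eval₂_mul, hG] at h2
  simpa using h2

lemma mul_pow_eq {A : Type*} [CommRing A] {u c : A} (h : u * u = c * u) :
    ∀ n : ℕ, u * u ^ n = u * c ^ n
  | 0 => by simp
  | n + 1 => by
    have ih := mul_pow_eq h n
    calc u * u ^ (n+1) = (u * u) * u ^ n := by ring
    _ = c * (u * u ^ n) := by rw [h]; ring
    _ = c * (u * c ^ n) := by rw [ih]
    _ = u * c ^ (n+1) := by ring

lemma mul_eval₂_eq {A B : Type*} [CommRing A] [CommRing B] (ψ : B →+* A) {u c : A}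
    (h : u * u = c * u) (P : B[X]) :
    u * eval₂ ψ u P = u * eval₂ ψ c P := by
  induction P using Polynomial.induction_on' with
  | add p q hp hq => rw [eval₂_add, eval₂_add, mul_add, mul_add, hp, hq]
  | monomial n b =>
      rw [eval₂_monomial, eval₂_monomial, mul_left_comm, mul_pow_eq h, mul_left_comm]

lemma eval_map_rho (s : S) (f : S[X]) {G : Polynomial (S[X])} (hG : IsDeltaWitness f G)
    (a b : S) :
    (f.map ((Ideal.Quotient.mk (Ideal.span {(X * (X - Polynomial.C s) : S[X])})).comp
        (Polynomial.C))).eval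
      (Ideal.Quotient.mk _ (Polynomial.C a + Polynomial.C b * X)) =
    Ideal.Quotient.mk (Ideal.span {(X * (X - Polynomial.C s) : S[X])})
      (Polynomial.C (f.eval a) +
        Polynomial.C (b * ((G.eval (Polynomial.C (b * s))).eval a)) * X) := by
  set κ := Ideal.Quotient.mk (Ideal.span {(X * (X - Polynomial.C s) : S[X])}) with hκ
  set u := κ (Polynomial.C b * X) with hu
  set ψ : S[X] →+* (S[X] ⧸ Ideal.span {(X * (X - Polynomial.C s) : S[X])}) :=
    (κ.comp (C : S →+* S[X])).comp (evalRingHom a) with hψ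
  have h2 := congrArg (eval₂RingHom ψ u) hG
  rw [hom_eval₂ f ((C : S[X] →+* S[X][X]).comp (C : S →+* S[X]))
      (eval₂RingHom ψ u) (Polynomial.C X + X)] at h2
  have hc : (eval₂RingHom ψ u).comp ((C : S[X] →+* S[X][X]).comp (C : S →+* S[X]))
      = κ.comp (C : S →+* S[X]) := by ext t; simp [hψ]
  rw [hc] at h2
  have husq : u * u = κ (Polynomial.C (b * s)) * u := by
    rw [hu, ← map_mul, ← map_mul]
    rw [Ideal.Quotient.eq]
    exact Ideal.mem_span_singleton.mpr ⟨Polynomial.C (b * b), by simp only [map_mul]; ring⟩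
  have hGe : u * eval₂ ψ u G = u * ψ (G.eval (Polynomial.C (b * s))) := by
    rw [mul_eval₂_eq ψ husq G]
    congr 1
    have : κ (Polynomial.C (b * s)) = ψ (Polynomial.C (b * s)) := by simp [hψ]
    rw [this, eval₂_at_apply]
  have hpt : κ (Polynomial.C a + Polynomial.C b * X) = κ (Polynomial.C a) + u := by
    rw [map_add]
  rw [eval_map]
  have hΘpt : (eval₂RingHom ψ u) (Polynomial.C X + X) = κ (Polynomial.C a) + u := by
    simp [hψ]
  rw [hΘpt] at h2
  rw [hpt, h2]
  simp only [coe_eval₂RingHom, eval₂_add, eval₂_mul, eval₂_C, eval₂_X]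
  rw [hGe]
  simp only [hψ, RingHom.comp_apply, coe_evalRingHom, eval_C]
  rw [hu]
  push_cast [← map_mul, ← map_add]
  congr 1
  simp only [map_mul]
  ring

lemma eval_F (s : S) (f g : S[X]) {Gf Gg : Polynomial (S[X])}
    (hGf : IsDeltaWitness f Gf) (hGg : IsDeltaWitness g Gg) (a b : S) :
    ((f.map ((Ideal.Quotient.mk (Ideal.span {(X * (X - Polynomial.C s) : S[X])})).comp
        (Polynomial.C)) +
      g.map ((Ideal.Quotient.mk (Ideal.span {(X * (X - Polynomial.C s) : S[X])})).comp
        (Polynomial.C)) *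
        Polynomial.C (Ideal.Quotient.mk _ X)).eval
      (Ideal.Quotient.mk _ (Polynomial.C a + Polynomial.C b * X))) =
    Ideal.Quotient.mk (Ideal.span {(X * (X - Polynomial.C s) : S[X])})
      (Polynomial.C (f.eval a) +
        Polynomial.C (b * ((Gf.eval (Polynomial.C (b * s))).eval a) + g.eval (a + b * s)) * X)
    := by
  rw [eval_add, eval_mul, eval_C, eval_map_rho s f hGf a b, eval_map_rho s g hGg a b]
  rw [← map_mul, ← map_add, Ideal.Quotient.eq, Ideal.mem_span_singleton]
  refine ⟨Polynomial.C (b * ((Gg.eval (Polynomial.C (b * s))).eval a)), ?_⟩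
  rw [shift_eval hGg a (b * s)]
  simp only [map_mul, map_add]
  ring

lemma lin_eq_zero {S : Type*} [CommRing S] [Nontrivial S] {s e₁ e₂ : S}
    (h : (Polynomial.C e₁ + Polynomial.C e₂ * X : S[X]) ∈
      Ideal.span {(X * (X - Polynomial.C s) : S[X])}) : e₁ = 0 ∧ e₂ = 0 := by
  obtain ⟨c, hc⟩ := Ideal.mem_span_singleton.mp h
  have hm : (X * (X - Polynomial.C s) : S[X]).Monic :=
    monic_X.mul (monic_X_sub_C s)
  have hdeg2 : (X * (X - Polynomial.C s) : S[X]).natDegree = 2 := by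
    rw [natDegree_mul'] <;> simp
  have hc0 : c = 0 := by
    by_contra hne
    have hlc := coeff_mul_degree_add_degree (X * (X - Polynomial.C s) : S[X]) c
    rw [hm.leadingCoeff, one_mul, hdeg2] at hlc
    have hz : (Polynomial.C e₁ + Polynomial.C e₂ * X : S[X]).coeff (2 + c.natDegree) = 0 := by
      have h1 : (2 + c.natDegree) ≠ 0 := by omega
      have h2' : ¬((1 : ℕ) = 2 + c.natDegree) := by omega
      simp [coeff_C, coeff_X, h1, h2']
    rw [hc, hlc] at hz
    exact hne (leadingCoeff_eq_zero.mp hz)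
  rw [hc0, mul_zero] at hc
  constructor
  · have := congrArg (fun p => coeff p 0) hc
    simpa using this
  · have := congrArg (fun p => coeff p 1) hc
    simpa using this

end Aux

section Base

variable {R : Type*} [CommRing R]

lemma mem_rhoBase_iff (r : R) (k₁ k₂ : FractionRing R) :
    (Ideal.Quotient.mk (Ideal.span
        {(X * (X - Polynomial.C (algebraMap R (FractionRing R) r)) :
          Polynomial (FractionRing R))})
      (Polynomial.C k₁ + Polynomial.C k₂ * X) ∈ RhoBase R r) ↔
    (k₁ ∈ Set.range (algebraMap R (FractionRing R)) ∧
      k₂ ∈ Set.range (algebraMap R (FractionRing R))) := by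
  constructor
  · rintro ⟨p, hp⟩
    rcases subsingleton_or_nontrivial R with hR | hR
    · have h01 : (0 : FractionRing R) = 1 := by
        rw [← map_zero (algebraMap R (FractionRing R)), ← map_one (algebraMap R (FractionRing R))]
        congr 1
        exact Subsingleton.elim _ _
      haveI : Subsingleton (FractionRing R) := subsingleton_of_zero_eq_one h01
      exact ⟨⟨0, Subsingleton.elim _ _⟩, ⟨0, Subsingleton.elim _ _⟩⟩
    · haveI : Nontrivial (FractionRing R) := (IsFractionRing.injective R (FractionRing R)).nontrivial
      set m₀ : Polynomial R := X * (X - Polynomial.C r) with hm₀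
      have hm : m₀.Monic := monic_X.mul (monic_X_sub_C r)
      have hdeg : (p %ₘ m₀).degree ≤ 1 := by
        have h2 : m₀.degree = 2 := by
          rw [hm₀, (monic_X_sub_C r).degree_mul, degree_X, degree_X_sub_C]
          rfl
        have := degree_modByMonic_lt p hm
        rw [h2] at this
        exact Order.lt_succ_iff.mp (by exact_mod_cast this)
      have hrem := p.modByMonic_add_div m₀
      set a := (p %ₘ m₀).coeff 0
      set b := (p %ₘ m₀).coeff 1
      have hrep : p %ₘ m₀ = Polynomial.C b * X + Polynomial.C a :=
        eq_X_add_C_of_degree_le_one hdeg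
      simp only [RingHom.comp_apply, coe_mapRingHom] at hp
      have hmap : Ideal.Quotient.mk (Ideal.span
          {(X * (X - Polynomial.C (algebraMap R (FractionRing R) r)) :
            Polynomial (FractionRing R))})
          (map (algebraMap R (FractionRing R)) p) =
        Ideal.Quotient.mk _
          (Polynomial.C (algebraMap R (FractionRing R) a) +
            Polynomial.C (algebraMap R (FractionRing R) b) * X) := by
        rw [Ideal.Quotient.eq, Ideal.mem_span_singleton]
        refine ⟨map (algebraMap R (FractionRing R)) (p /ₘ m₀), ?_⟩
        conv_lhs => rw [← hrem]
        rw [Polynomial.map_add, Polynomial.map_mul, hrep]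
        simp only [Polynomial.map_add, Polynomial.map_mul, Polynomial.map_sub,
          Polynomial.map_C, Polynomial.map_X, hm₀]
        ring
      rw [hmap, Ideal.Quotient.eq] at hp
      have key : (Polynomial.C (algebraMap R (FractionRing R) a - k₁) +
          Polynomial.C (algebraMap R (FractionRing R) b - k₂) * X :
            Polynomial (FractionRing R)) =
          (Polynomial.C (algebraMap R (FractionRing R) a) +
            Polynomial.C (algebraMap R (FractionRing R) b) * X) -
          (Polynomial.C k₁ + Polynomial.C k₂ * X) := by
        simp only [map_sub]; ring
      have hlin := lin_eq_zero (e₁ := algebraMap R (FractionRing R) a - k₁)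
        (e₂ := algebraMap R (FractionRing R) b - k₂)
        (s := algebraMap R (FractionRing R) r) (by rw [key]; exact hp)
      exact ⟨⟨a, sub_eq_zero.mp hlin.1⟩, ⟨b, sub_eq_zero.mp hlin.2⟩⟩
  · rintro ⟨⟨a, ha⟩, ⟨b, hb⟩⟩
    refine ⟨Polynomial.C a + Polynomial.C b * X, ?_⟩
    simp only [RingHom.comp_apply, coe_mapRingHom]
    congr 1
    simp [Polynomial.map_add, Polynomial.map_mul, map_C, map_X, ha, hb]

end Base

/-- For `f, g ∈ K[X]` (`K = T(R)`) and `F = f̄ + ḡ·ρ ∈ K[ρ][X]`,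
`F` maps `R[ρ]` into `R[ρ]` iff `f ∈ Int(R; r)` and `g ∈ Int(R)`.  That is,
`Int(R[ρ]) = Int(R; r) + Int(R)·ρ`. -/
theorem intPoly_rhoRing (R : Type*) [CommRing R] (r : R)
    (f g : Polynomial (FractionRing R)) :
    (∀ x y : R,
        ((f.map ((Ideal.Quotient.mk _).comp (Polynomial.C (R := FractionRing R))) +
            g.map ((Ideal.Quotient.mk _).comp (Polynomial.C (R := FractionRing R))) *
              Polynomial.C (Ideal.Quotient.mk _ X)).eval
          (Ideal.Quotient.mk _
            (Polynomial.C (algebraMap R (FractionRing R) x) +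
              Polynomial.C (algebraMap R (FractionRing R) y) * X))
          : RhoRing (FractionRing R) (algebraMap R (FractionRing R) r)) ∈ RhoBase R r)
      ↔ f ∈ IntPolyRho R r ∧ g ∈ IntPoly R := by
  set φ := algebraMap R (FractionRing R) with hφ
  have hmain : ∀ x y : R,
      ((f.map ((Ideal.Quotient.mk _).comp (Polynomial.C (R := FractionRing R))) +
          g.map ((Ideal.Quotient.mk _).comp (Polynomial.C (R := FractionRing R))) *
            Polynomial.C (Ideal.Quotient.mk _ X)).eval
        (Ideal.Quotient.mk _
          (Polynomial.C (φ x) + Polynomial.C (φ y) * X))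
        : RhoRing (FractionRing R) (φ r)) =
      Ideal.Quotient.mk _
        (Polynomial.C (f.eval (φ x)) +
          Polynomial.C (φ y * (((deltaW f).eval (Polynomial.C (φ y * φ r))).eval (φ x)) +
            g.eval (φ x + φ y * φ r)) * X) := fun x y =>
    eval_F (φ r) f g (deltaW_spec f) (deltaW_spec g) (φ x) (φ y)
  constructor
  · intro H
    have H' : ∀ x y : R,
        f.eval (φ x) ∈ Set.range φ ∧
        (φ y * (((deltaW f).eval (Polynomial.C (φ y * φ r))).eval (φ x)) +
          g.eval (φ x + φ y * φ r)) ∈ Set.range φ := by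
      intro x y
      have h := H x y
      rw [hmain x y, mem_rhoBase_iff] at h
      exact h
    have hg : g ∈ IntPoly R := by
      intro x
      have h := (H' x 0).2
      simpa using h
    have hf1 : f ∈ IntPoly R := fun x => (H' x 0).1
    refine ⟨⟨hf1, ?_⟩, hg⟩
    intro y G hG x
    have hGeq : G = deltaW f := deltaW_unique hG (deltaW_spec f)
    obtain ⟨u, hu⟩ := (H' x y).2
    obtain ⟨v, hv⟩ := hg (x + y * r)
    refine ⟨u - v, ?_⟩
    rw [map_sub, hu, hv]
    rw [hGeq, eval_mul, eval_C, map_mul φ y r, map_add φ x (y*r), map_mul φ y r]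
    ring
  · rintro ⟨⟨hf1, hf2⟩, hg⟩ x y
    rw [hmain x y, mem_rhoBase_iff]
    refine ⟨hf1 x, ?_⟩
    obtain ⟨u, hu⟩ := hf2 y (deltaW f) (deltaW_spec f) x
    obtain ⟨v, hv⟩ := hg (x + y * r)
    refine ⟨u + v, ?_⟩
    rw [map_add, hu, hv]
    rw [eval_mul, eval_C, map_mul φ y r, map_add φ x (y*r), map_mul φ y r]
end

section
/- Let R be a commutative ring and let r ∈ R be a non-zerodivisor of R. Then: (1) Int(R; rR) = Int(R; r), i.e., a polynomial f ∈ Int(R) preserves congruences modulo the ideal rR (meaning a ≡ b mod rR implies f(a) ≡ f(b) mod rR for all a, b ∈ R) if and only if y·Δ_{yr}f ∈ Int(R) for all y ∈ R; and (2) Int(R, rR) = r·Int(R), i.e., a polynomial f ∈ Int(R) satisfies f(a) ∈ rR for all a ∈ R if and only if f = r·g for some g ∈ Int(R). -/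
open Polynomial

lemma exists_deltaWitness' {S : Type*} [CommRing S] (f : Polynomial S) :
    ∃ G, f.eval₂ (Polynomial.C.comp Polynomial.C) (Polynomial.C X + X)
      = Polynomial.C f + X * G := by
  have hcomp : (Polynomial.evalRingHom (0 : Polynomial S)).comp
      (Polynomial.C.comp Polynomial.C) = Polynomial.C := by
    ext s; simp
  have key : (Polynomial.evalRingHom (0 : Polynomial S))
      (f.eval₂ (Polynomial.C.comp Polynomial.C) (Polynomial.C X + X)) = f := by
    rw [Polynomial.hom_eval₂, hcomp]
    simp
  have h : (X : Polynomial (Polynomial S)) ∣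
      f.eval₂ (Polynomial.C.comp Polynomial.C) (Polynomial.C X + X) - Polynomial.C f := by
    rw [Polynomial.X_dvd_iff, Polynomial.coeff_zero_eq_eval_zero]
    simp only [Polynomial.eval_sub]
    simpa using congrArg (fun z => z - f) key
  obtain ⟨G, hG⟩ := h
  exact ⟨G, by linear_combination (norm := ring_nf) hG⟩

lemma deltaWitness_eval' {S : Type*} [CommRing S] {f : Polynomial S}
    {G : Polynomial (Polynomial S)}
    (h : f.eval₂ (Polynomial.C.comp Polynomial.C) (Polynomial.C X + X)
      = Polynomial.C f + X * G) (c a : S) :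
    f.eval (a + c) = f.eval a + c * (G.eval (Polynomial.C c)).eval a := by
  have h1 := congrArg (Polynomial.evalRingHom (Polynomial.C c)) h
  rw [Polynomial.hom_eval₂] at h1
  have hcomp : (Polynomial.evalRingHom (Polynomial.C c : Polynomial S)).comp
      (Polynomial.C.comp Polynomial.C) = Polynomial.C := by
    ext s; simp
  rw [hcomp] at h1
  simp only [coe_evalRingHom, eval_add, eval_C, eval_X, eval_mul] at h1
  have h2 := congrArg (Polynomial.evalRingHom a) h1
  rw [Polynomial.hom_eval₂] at h2
  have hcomp2 : (Polynomial.evalRingHom (a : S)).comp Polynomial.C = RingHom.id S := by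
    ext s; simp
  rw [hcomp2] at h2
  rw [show ∀ (x : S) (p : Polynomial S), Polynomial.eval₂ (RingHom.id S) x p = p.eval x from fun _ _ => rfl] at h2
  simpa [add_comm] using h2
/-- Let `r` be a non-zerodivisor of `R`.  Then
(1) `Int(R; rR) = Int(R; r)`: an `f ∈ Int(R)` preserves congruences modulo `rR`
iff `y·Δ_{yr}f ∈ Int(R)` for all `y ∈ R`; and
(2) `Int(R, rR) = r·Int(R)`: an `f ∈ Int(R)` takes all its values on `R` in `rR`
iff `f = r·g` for some `g ∈ Int(R)`. -/
theorem intPoly_mod_nonZeroDivisor (R : Type*) [CommRing R] (r : R)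
    (hr : r ∈ nonZeroDivisors R) :
    (∀ f ∈ IntPoly R,
      ((∀ a b : R, (∃ c : R, a - b = r * c) →
          ∃ c : R,
            f.eval (algebraMap R (FractionRing R) a) - f.eval (algebraMap R (FractionRing R) b)
              = algebraMap R (FractionRing R) (r * c))
        ↔ ∀ y : R, ∀ G, IsDeltaWitness f G →
            Polynomial.C (algebraMap R (FractionRing R) y) *
              G.eval (Polynomial.C (algebraMap R (FractionRing R) (y * r))) ∈ IntPoly R)) ∧
    (∀ f ∈ IntPoly R,
      ((∀ a : R, ∃ c : R,
          f.eval (algebraMap R (FractionRing R) a) = algebraMap R (FractionRing R) (r * c))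
        ↔ ∃ g ∈ IntPoly R, f = Polynomial.C (algebraMap R (FractionRing R) r) * g)) := by
  set K := FractionRing R with hK
  set ι := algebraMap R K with hι
  have hu : IsUnit (ι r) := IsLocalization.map_units K ⟨r, hr⟩
  constructor
  · intro f _hf
    constructor
    · intro hA y G hG a
      have hev := deltaWitness_eval' hG (ι (y * r)) (ι a)
      obtain ⟨c, hc⟩ := hA (a + y * r) a ⟨y, by ring⟩
      rw [map_add, hev] at hc
      set g := (G.eval (Polynomial.C (ι (y * r)))).eval (ι a) with hg
      have key : ι r * (ι y * g) = ι r * ι c := by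
        have h2 : ι (y * r) * g = ι (r * c) := by linear_combination hc
        rw [map_mul, map_mul] at h2
        linear_combination h2
      refine ⟨c, ?_⟩
      rw [eval_mul, eval_C]
      exact (hu.mul_left_cancel key).symm
    · rintro hB a b ⟨c, hc⟩
      obtain ⟨G, hG⟩ := exists_deltaWitness' f
      have hev := deltaWitness_eval' hG (ι (c * r)) (ι b)
      obtain ⟨d, hd⟩ := hB c G hG b
      rw [eval_mul, eval_C] at hd
      set g := (G.eval (Polynomial.C (ι (c * r)))).eval (ι b) with hg
      refine ⟨d, ?_⟩
      have hab : ι a = ι b + ι (c * r) := by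
        rw [← map_add]; congr 1; linear_combination hc
      rw [hab, hev, map_mul, map_mul]
      linear_combination (-(ι r : K)) * hd
  · intro f _hf
    constructor
    · intro h
      obtain ⟨u, hu'⟩ := hu
      refine ⟨Polynomial.C ((u⁻¹ : Kˣ) : K) * f, ?_, ?_⟩
      · intro a
        obtain ⟨c, hc⟩ := h a
        refine ⟨c, ?_⟩
        rw [eval_mul, eval_C, hc, map_mul, ← hu', ← mul_assoc]
        simp
        rfl
      · rw [← mul_assoc, ← Polynomial.C_mul, ← hu']
        simp
    · rintro ⟨g, hg, rfl⟩ a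
      obtain ⟨c, hc⟩ := hg a
      refine ⟨c, ?_⟩
      rw [eval_mul, eval_C, ← hc, map_mul]
end

section
/- Let R be a commutative ring with total quotient ring K = T(R), and let r ∈ R be a non-zerodivisor of R. Then the assignment f + gρ ↦ (f, f + rg) defines a ring isomorphism from Int(R[ρ]) = {f̄ + ḡρ ∈ K[ρ][X] : f, g ∈ K[X] and the polynomial maps R[ρ] into R[ρ]} onto the subring {(u, v) ∈ Int(R; r) × Int(R; r) : v − u ∈ r·Int(R)} of K[X] × K[X]. Equivalently, for f, g ∈ K[X], f + gρ ∈ Int(R[ρ]) if and only if f ∈ Int(R; r), f + rg ∈ Int(R; r), and g ∈ Int(R). -/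
open Polynomial

section Aux

/-- If u(0)=0 and u(c)=0 with c a unit, then X(X-c) ∣ u. -/
lemma aux_mem_span {K : Type*} [CommRing K] {c : K} (hc : IsUnit c) {u : Polynomial K}
    (h0 : u.eval 0 = 0) (h1 : u.eval c = 0) :
    u ∈ Ideal.span {(X * (X - Polynomial.C c) : Polynomial K)} := by
  rw [Ideal.mem_span_singleton]
  have hX : X ∣ u := by
    rw [X_dvd_iff, coeff_zero_eq_eval_zero]; exact h0
  obtain ⟨v, hv⟩ := hX
  have hv1 : v.eval c = 0 := by
    have : c * v.eval c = 0 := by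
      have := h1; rw [hv] at this; simpa using this
    exact (hc.mul_right_eq_zero).mp this
  obtain ⟨w, hw⟩ := (dvd_iff_isRoot).mpr hv1
  exact ⟨w, by rw [hv, hw]; ring⟩

/-- Existence of a delta witness. -/
lemma aux_delta_exists {K : Type*} [CommRing K] (f : Polynomial K) :
    ∃ G, IsDeltaWitness f G := by
  have hdvd : (X : Polynomial (Polynomial K)) ∣
      (f.eval₂ (Polynomial.C.comp Polynomial.C) (Polynomial.C X + X) - Polynomial.C f) := by
    rw [X_dvd_iff, coeff_zero_eq_eval_zero]
    have h := hom_eval₂ f (Polynomial.C.comp Polynomial.C)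
      (evalRingHom (0 : Polynomial K)) (Polynomial.C X + X)
    have hc : (evalRingHom (0 : Polynomial K)).comp (Polynomial.C.comp Polynomial.C)
        = (Polynomial.C : K →+* Polynomial K) := by
      ext a; simp
    rw [hc] at h
    simp only [map_add, coe_evalRingHom, eval_C, eval_X, add_zero] at h
    simp only [eval_sub, eval_C, coe_evalRingHom]
    rw [h, eval₂_C_X, sub_self]
  obtain ⟨G, hG⟩ := hdvd
  exact ⟨G, by rw [IsDeltaWitness]; linear_combination hG⟩

/-- The fundamental identity for delta witnesses. -/
lemma aux_delta_eval {K : Type*} [CommRing K] {f : Polynomial K} {G : Polynomial (Polynomial K)}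
    (hG : IsDeltaWitness f G) (c x : K) :
    f.eval (x + c) = f.eval x + c * (G.eval (Polynomial.C c)).eval x := by
  have h := congrArg (fun p => (evalRingHom (Polynomial.C c)) p) hG
  rw [hom_eval₂] at h
  have hc : (evalRingHom (Polynomial.C c)).comp (Polynomial.C.comp Polynomial.C)
      = (Polynomial.C : K →+* Polynomial K) := by
    ext a; simp
  rw [hc] at h
  simp only [map_add, map_mul, coe_evalRingHom, eval_C, eval_X] at h
  -- h : eval₂ C (X + C c) f = f + C c * G.eval (C c)
  have h2 := congrArg (Polynomial.eval x) h
  rw [show (eval₂ Polynomial.C (X + Polynomial.C c) f) = f.comp (X + Polynomial.C c) from rfl]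
      at h2
  rw [eval_comp] at h2
  simpa using h2

end Aux

/-- Let `r` be a non-zerodivisor of `R` and `K = T(R)`.  The assignment
`f + gρ ↦ (f, f + rg)` identifies `Int(R[ρ])` with
`{(u, v) ∈ Int(R; r) × Int(R; r) : v − u ∈ r·Int(R)}`: for `f, g ∈ K[X]`, the polynomial
`F = f̄ + ḡ·ρ` maps `R[ρ]` into `R[ρ]` if and only if `f ∈ Int(R; r)`,
`f + rg ∈ Int(R; r)` and `g ∈ Int(R)`. -/
theorem intPoly_rhoRing_pullback (R : Type*) [CommRing R] (r : R)
    (hr : r ∈ nonZeroDivisors R) (f g : Polynomial (FractionRing R)) :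
    (∀ x y : R,
        ((f.map ((Ideal.Quotient.mk _).comp (Polynomial.C (R := FractionRing R))) +
            g.map ((Ideal.Quotient.mk _).comp (Polynomial.C (R := FractionRing R))) *
              Polynomial.C (Ideal.Quotient.mk _ X)).eval
          (Ideal.Quotient.mk _
            (Polynomial.C (algebraMap R (FractionRing R) x) +
              Polynomial.C (algebraMap R (FractionRing R) y) * X))
          : RhoRing (FractionRing R) (algebraMap R (FractionRing R) r)) ∈ RhoBase R r)
      ↔ f ∈ IntPolyRho R r ∧
          f + Polynomial.C (algebraMap R (FractionRing R) r) * g ∈ IntPolyRho R r ∧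
          g ∈ IntPoly R := by
  set φ := algebraMap R (FractionRing R) with hφ
  set K := FractionRing R with hK
  have hr' : IsUnit (φ r) := IsLocalization.map_units K ⟨r, hr⟩
  set I : Ideal (Polynomial K) :=
    Ideal.span {(X * (X - Polynomial.C (φ r)) : Polynomial K)} with hI
  have hkill : ∀ c : K, (X * (X - Polynomial.C (φ r)) : Polynomial K).eval c = 0 →
      ∀ p ∈ I, (evalRingHom c) p = 0 := by
    intro c hc p hp
    rw [hI, Ideal.mem_span_singleton] at hp
    obtain ⟨w, hw⟩ := hp
    simp [hw, hc]
  have h0 : ∀ p ∈ I, (evalRingHom (0 : K)) p = 0 := hkill 0 (by simp)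
  have h1 : ∀ p ∈ I, (evalRingHom (φ r)) p = 0 := hkill (φ r) (by simp)
  set e0 := Ideal.Quotient.lift I (evalRingHom (0 : K)) h0 with he0
  set e1 := Ideal.Quotient.lift I (evalRingHom (φ r)) h1 with he1
  -- membership in RhoBase via the two evaluations
  have memBase : ∀ z, z ∈ RhoBase R r ↔
      (e0 z ∈ Set.range φ ∧ ∃ b : R, e1 z - e0 z = φ r * φ b) := by
    intro z
    constructor
    · rintro ⟨p, rfl⟩
      simp only [RingHom.comp_apply, coe_mapRingHom]
      have hp0 : e0 ((Ideal.Quotient.mk I) (p.map φ)) = φ (p.eval 0) := by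
        rw [he0, Ideal.Quotient.lift_mk, coe_evalRingHom, eval_map,
          show (0 : K) = φ 0 by simp, eval₂_hom]
      have hp1 : e1 ((Ideal.Quotient.mk I) (p.map φ)) = φ (p.eval r) := by
        rw [he1, Ideal.Quotient.lift_mk, coe_evalRingHom, eval_map, eval₂_hom]
      refine ⟨⟨p.eval 0, hp0.symm⟩, ?_⟩
      have hXd : (X : Polynomial R) ∣ (p - Polynomial.C (p.eval 0)) := by
        rw [X_dvd_iff, coeff_zero_eq_eval_zero]; simp
      obtain ⟨q, hq⟩ := hXd
      refine ⟨q.eval r, ?_⟩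
      have hqq := congrArg (Polynomial.eval r) hq
      simp only [eval_sub, eval_C, eval_mul, eval_X] at hqq
      rw [hp0, hp1, ← map_mul, ← map_sub, hqq]
    · rintro ⟨⟨a, ha⟩, ⟨b, hb⟩⟩
      obtain ⟨w, rfl⟩ := Ideal.Quotient.mk_surjective (I := I) z
      have hw0 : e0 ((Ideal.Quotient.mk I) w) = w.eval 0 := by
        rw [he0, Ideal.Quotient.lift_mk, coe_evalRingHom]
      have hw1 : e1 ((Ideal.Quotient.mk I) w) = w.eval (φ r) := by
        rw [he1, Ideal.Quotient.lift_mk, coe_evalRingHom]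
      refine ⟨Polynomial.C a + Polynomial.C b * X, ?_⟩
      simp only [RingHom.comp_apply, coe_mapRingHom, Polynomial.map_add,
        Polynomial.map_mul, Polynomial.map_C, Polynomial.map_X]
      rw [Ideal.Quotient.eq]
      apply aux_mem_span hr'
      · simp only [eval_sub, eval_add, eval_mul, eval_C, eval_X, mul_zero, add_zero]
        rw [← hφ, ha, ← hw0, sub_self]
      · simp only [eval_sub, eval_add, eval_mul, eval_C, eval_X]
        rw [← hφ, ← hw1]
        linear_combination ha - hb
  -- evaluation of the value through the two lifts
  have evalVal : ∀ (c : K) (hc : ∀ p ∈ I, (evalRingHom c) p = 0) (x y : R),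
      Ideal.Quotient.lift I (evalRingHom c) hc
        ((f.map ((Ideal.Quotient.mk I).comp (Polynomial.C (R := K))) +
            g.map ((Ideal.Quotient.mk I).comp (Polynomial.C (R := K))) *
              Polynomial.C (Ideal.Quotient.mk I X)).eval
          (Ideal.Quotient.mk I (Polynomial.C (φ x) + Polynomial.C (φ y) * X)))
        = (f + Polynomial.C c * g).eval (φ x + φ y * c) := by
    intro c hc x y
    set ψ := Ideal.Quotient.lift I (evalRingHom c) hc with hψ
    have hcomp : ψ.comp ((Ideal.Quotient.mk I).comp (Polynomial.C (R := K)))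
        = RingHom.id K := by
      refine RingHom.ext fun a => ?_
      show ψ ((Ideal.Quotient.mk I) (Polynomial.C a)) = a
      rw [hψ, Ideal.Quotient.lift_mk, coe_evalRingHom, eval_C]
    have hz : ψ (Ideal.Quotient.mk I (Polynomial.C (φ x) + Polynomial.C (φ y) * X))
        = φ x + φ y * c := by
      rw [hψ, Ideal.Quotient.lift_mk]
      simp
    have key : ∀ p : Polynomial K,
        ψ ((p.map ((Ideal.Quotient.mk I).comp (Polynomial.C (R := K)))).eval
          (Ideal.Quotient.mk I (Polynomial.C (φ x) + Polynomial.C (φ y) * X)))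
        = p.eval (φ x + φ y * c) := by
      intro p
      rw [eval_map, hom_eval₂, hcomp, hz]
      rfl
    have hX : ψ (Ideal.Quotient.mk I X) = c := by
      rw [hψ, Ideal.Quotient.lift_mk]
      simp
    rw [eval_add, eval_mul (R := Polynomial K ⧸ I), eval_C, RingHom.map_add ψ, RingHom.map_mul ψ,
      key f, key g, hX]
    simp only [eval_add, eval_mul, eval_C]
    ring
  -- characterization of IntPolyRho
  have intRhoIff : ∀ h : Polynomial K, h ∈ IntPolyRho R r ↔
      (h ∈ IntPoly R ∧ ∀ x y : R, ∃ b : R,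
        h.eval (φ x + φ y * φ r) - h.eval (φ x) = φ r * φ b) := by
    intro h
    constructor
    · rintro ⟨hInt, hDelta⟩
      refine ⟨hInt, fun x y => ?_⟩
      obtain ⟨G, hG⟩ := aux_delta_exists h
      obtain ⟨b, hb⟩ := hDelta y G hG x
      refine ⟨b, ?_⟩
      have hi := aux_delta_eval hG (φ (y * r)) (φ x)
      rw [map_mul] at hi hb
      simp only [eval_mul, eval_C, ← hφ] at hb
      linear_combination hi - φ r * hb
    · rintro ⟨hInt, hDiff⟩
      refine ⟨hInt, fun y G hG a => ?_⟩
      obtain ⟨b, hb⟩ := hDiff a y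
      refine ⟨b, ?_⟩
      have hi := aux_delta_eval hG (φ (y * r)) (φ a)
      rw [map_mul] at hi
      rw [← hφ]
      rw [map_mul]
      simp only [eval_mul, eval_C]
      apply hr'.mul_left_cancel
      linear_combination hi - hb
  -- put everything together
  have main : ∀ x y : R,
      ((f.map ((Ideal.Quotient.mk I).comp (Polynomial.C (R := K))) +
          g.map ((Ideal.Quotient.mk I).comp (Polynomial.C (R := K))) *
            Polynomial.C (Ideal.Quotient.mk I X)).eval
        (Ideal.Quotient.mk I (Polynomial.C (φ x) + Polynomial.C (φ y) * X))
        ∈ RhoBase R r)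
      ↔ (f.eval (φ x) ∈ Set.range φ ∧ ∃ b : R,
          (f + Polynomial.C (φ r) * g).eval (φ x + φ y * φ r) - f.eval (φ x)
            = φ r * φ b) := by
    intro x y
    rw [memBase]
    have E0 := evalVal 0 h0 x y
    have E1 := evalVal (φ r) h1 x y
    rw [← he0] at E0
    rw [← he1] at E1
    rw [E0, E1]
    simp
  constructor
  · intro H
    have H' : ∀ x y : R, f.eval (φ x) ∈ Set.range φ ∧ ∃ b : R,
        (f + Polynomial.C (φ r) * g).eval (φ x + φ y * φ r) - f.eval (φ x)
          = φ r * φ b := fun x y => (main x y).mp (H x y)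
    have fInt : f ∈ IntPoly R := fun a => (H' a 0).1
    have gInt : g ∈ IntPoly R := by
      intro a
      obtain ⟨b, hb⟩ := (H' a 0).2
      simp only [map_zero, zero_mul, add_zero, eval_add, eval_mul, eval_C] at hb
      refine ⟨b, ?_⟩
      rw [← hφ]
      apply hr'.mul_left_cancel
      linear_combination -hb
    have hIntDiff : ∀ x y : R, ∃ b : R,
        (f + Polynomial.C (φ r) * g).eval (φ x + φ y * φ r)
          - (f + Polynomial.C (φ r) * g).eval (φ x) = φ r * φ b := by
      intro x y
      obtain ⟨b1, hb1⟩ := (H' x y).2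
      obtain ⟨b2, hb2⟩ := (H' x 0).2
      simp only [map_zero, zero_mul, add_zero] at hb2
      refine ⟨b1 - b2, ?_⟩
      rw [map_sub]
      linear_combination hb1 - hb2
    have hInt : (f + Polynomial.C (φ r) * g) ∈ IntPoly R := by
      intro a
      obtain ⟨u, hu⟩ := fInt a
      obtain ⟨v, hv⟩ := gInt a
      refine ⟨u + r * v, ?_⟩
      rw [← hφ] at hu hv ⊢
      simp only [map_add, map_mul, eval_add, eval_mul, eval_C]
      linear_combination hu + φ r * hv
    have fIntDiff : ∀ x y : R, ∃ b : R,
        f.eval (φ x + φ y * φ r) - f.eval (φ x) = φ r * φ b := by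
      intro x y
      obtain ⟨b1, hb1⟩ := hIntDiff x y
      obtain ⟨c1, hc1⟩ := gInt (x + y * r)
      obtain ⟨c2, hc2⟩ := gInt x
      rw [← hφ] at hc1 hc2
      rw [show φ (x + y * r) = φ x + φ y * φ r by rw [map_add, map_mul]] at hc1
      refine ⟨b1 - c1 + c2, ?_⟩
      simp only [eval_add, eval_mul, eval_C] at hb1
      rw [map_add, map_sub]
      linear_combination hb1 + φ r * hc1 - φ r * hc2
    exact ⟨(intRhoIff f).mpr ⟨fInt, fIntDiff⟩,
      (intRhoIff _).mpr ⟨hInt, hIntDiff⟩, gInt⟩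
  · rintro ⟨hf, hh, hg⟩ x y
    rw [intRhoIff] at hf hh
    refine (main x y).mpr ⟨hf.1 x, ?_⟩
    obtain ⟨b1, hb1⟩ := hh.2 x y
    obtain ⟨b2, hb2⟩ := hg x
    rw [← hφ] at hb2
    refine ⟨b1 + b2, ?_⟩
    simp only [eval_add, eval_mul, eval_C] at hb1 ⊢
    rw [map_add]
    linear_combination hb1 - φ r * hb2
end

section
/- Let R be a commutative ring with total quotient ring K = T(R), and let n be a positive integer. Consider the idealization R(+)Rⁿ ≅ R[δ₁,…,δₙ] = R[T₁,…,Tₙ]/(T₁,…,Tₙ)², viewed inside K(+)Kⁿ. For f ∈ K[X] and h₁,…,hₙ ∈ K[X], the polynomial F = f + Σᵢ hᵢδᵢ satisfies: (1) F(x) ∈ R(+)Rⁿ for all x ∈ R if and only if f ∈ Int(R) and hᵢ ∈ Int(R) for all i; and (2) F(z) ∈ R(+)Rⁿ for all z ∈ R(+)Rⁿ if and only if f ∈ Int^(1)(R) and hᵢ ∈ Int(R) for all i. That is, Int(R, R[δ₁,…,δₙ]) = Int(R)[δ₁,…,δₙ] and Int(R[δ₁,…,δₙ]) = Int^(1)(R)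 ⊕ ⊕ᵢ Int(R)·δᵢ. -/
open Polynomial TrivSqZeroExt

lemma eval_map_inlHom {K M : Type*} [CommRing K] [AddCommGroup M] [Module K M]
    [Module Kᵐᵒᵖ M] [IsCentralScalar K M] (f : K[X]) (a : K) (w : M) :
    (f.map (inlHom K M)).eval (inl a + inr w)
      = inl (f.eval a) + inr ((derivative f).eval a • w) := by
  induction f using Polynomial.induction_on' with
  | add p q hp hq =>
    simp only [Polynomial.map_add, eval_add, hp, hq, derivative_add, add_smul, inl_add, inr_add]
    abel
  | monomial k b =>
    rw [map_monomial, eval_monomial, derivative_monomial]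
    show inl b * _ ^ _ = _
    ext
    · simp [fst_pow]
    · simp only [snd_mul, snd_inl, fst_inl, snd_pow, fst_pow, fst_add, fst_inl, fst_inr,
        snd_add, snd_inl, snd_inr, smul_zero, add_zero, zero_add, smul_smul, eval_monomial,
        Nat.pred_eq_sub_one]
      rw [smul_comm, ← Nat.cast_smul_eq_nsmul K, smul_smul, smul_smul]
      ring_nf

lemma big_eval {K : Type*} [CommRing K] {n : ℕ} (f : K[X]) (h : Fin n → K[X])
    (a : K) (w : Fin n → K) :
    (f.map (inlHom K (Fin n → K)) +
        ∑ i : Fin n, (h i).map (inlHom K (Fin n → K)) * Polynomial.C (inr (Pi.single i 1))).eval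
      (inl a + inr w)
    = inl (f.eval a) +
        inr (fun j => (derivative f).eval a * w j + (h j).eval a) := by
  have key : ∀ g : K[X], ∀ i : Fin n,
      (g.map (inlHom K (Fin n → K)) * Polynomial.C (inr (Pi.single i 1))).eval
        (inl a + inr w)
      = inr (g.eval a • (Pi.single i 1 : Fin n → K)) := by
    intro g i
    rw [eval_mul, eval_C, eval_map_inlHom, add_mul, inl_mul_inr, inr_mul_inr]
    simp
  rw [eval_add, eval_finset_sum, eval_map_inlHom]
  simp only [key]
  rw [← inr_sum, add_assoc, ← inr_add]
  refine congrArg _ (congrArg inr (funext fun j => ?_))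
  simp only [Pi.add_apply, Pi.smul_apply, Finset.sum_apply, smul_eq_mul]
  rw [Finset.sum_eq_single j]
  · simp
  · intro i _ hij; simp [Pi.single_apply, hij]
  · simp

/-- Membership in the subring `R(+)Rⁿ` of `K(+)Kⁿ`, `K = T(R)`: all components lie in the
image of `R`. -/
def MemIdealizationBase (R : Type*) [CommRing R] (n : ℕ)
    (z : TrivSqZeroExt (FractionRing R) (Fin n → FractionRing R)) : Prop :=
  z.fst ∈ Set.range (algebraMap R (FractionRing R)) ∧
    ∀ i : Fin n, z.snd i ∈ Set.range (algebraMap R (FractionRing R))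

/-- Let `K = T(R)`, `n ≥ 1`, and consider
`R(+)Rⁿ ≅ R[δ₁,…,δₙ] = R[T₁,…,Tₙ]/(T₁,…,Tₙ)²` inside `K(+)Kⁿ`.  For `f, h₁, …, hₙ ∈ K[X]`
and `F = f + Σᵢ hᵢδᵢ`:
(1) `F(x) ∈ R(+)Rⁿ` for all `x ∈ R` iff `f ∈ Int(R)` and all `hᵢ ∈ Int(R)`, i.e.
`Int(R, R[δ₁,…,δₙ]) = Int(R)[δ₁,…,δₙ]`; and
(2) `F(z) ∈ R(+)Rⁿ` for all `z ∈ R(+)Rⁿ` iff `f ∈ Int⁽¹⁾(R)` and all `hᵢ ∈ Int(R)`, i.e.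
`Int(R[δ₁,…,δₙ]) = Int⁽¹⁾(R) ⊕ ⊕ᵢ Int(R)·δᵢ`. -/
theorem intPoly_idealization_pow (R : Type*) [CommRing R] (n : ℕ) (hn : 0 < n)
    (f : Polynomial (FractionRing R)) (h : Fin n → Polynomial (FractionRing R)) :
    ((∀ x : R,
        MemIdealizationBase R n
          ((f.map (inlHom (FractionRing R) (Fin n → FractionRing R)) +
              ∑ i : Fin n,
                (h i).map (inlHom (FractionRing R) (Fin n → FractionRing R)) *
                  Polynomial.C (inr (Pi.single i 1))).eval
            (inl (algebraMap R (FractionRing R) x))))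
      ↔ f ∈ IntPoly R ∧ ∀ i, h i ∈ IntPoly R) ∧
    ((∀ (x : R) (v : Fin n → R),
        MemIdealizationBase R n
          ((f.map (inlHom (FractionRing R) (Fin n → FractionRing R)) +
              ∑ i : Fin n,
                (h i).map (inlHom (FractionRing R) (Fin n → FractionRing R)) *
                  Polynomial.C (inr (Pi.single i 1))).eval
            (inl (algebraMap R (FractionRing R) x) +
              inr (fun i => algebraMap R (FractionRing R) (v i)))))
      ↔ f ∈ IntPoly R ∧ derivative f ∈ IntPoly R ∧ ∀ i, h i ∈ IntPoly R) := by
  classical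
  set K := FractionRing R
  set φ := algebraMap R K with hφ
  set S := Set.range φ with hS
  have Sadd : ∀ {a b : K}, a ∈ S → b ∈ S → a + b ∈ S := by
    rintro a b ⟨r, rfl⟩ ⟨s, rfl⟩; exact ⟨r + s, map_add _ _ _⟩
  have Ssub : ∀ {a b : K}, a ∈ S → b ∈ S → a - b ∈ S := by
    rintro a b ⟨r, rfl⟩ ⟨s, rfl⟩; exact ⟨r - s, map_sub _ _ _⟩
  have Smul : ∀ {a b : K}, a ∈ S → b ∈ S → a * b ∈ S := by
    rintro a b ⟨r, rfl⟩ ⟨s, rfl⟩; exact ⟨r * s, map_mul _ _ _⟩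
  have mem_iff : ∀ (a : K) (w : Fin n → K),
      MemIdealizationBase R n
        ((f.map (inlHom K (Fin n → K)) +
            ∑ i : Fin n, (h i).map (inlHom K (Fin n → K)) *
              Polynomial.C (inr (Pi.single i 1))).eval (inl a + inr w))
      ↔ f.eval a ∈ S ∧ ∀ j : Fin n,
          (derivative f).eval a * w j + (h j).eval a ∈ S := by
    intro a w
    rw [big_eval]
    unfold MemIdealizationBase
    simp only [fst_add, snd_add, fst_inl, snd_inl, fst_inr, snd_inr, zero_add, Pi.add_apply,
      Pi.zero_apply, add_zero]
    exact Iff.rfl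
  have hz : ∀ a : K, (inl a : TrivSqZeroExt K (Fin n → K)) = inl a + inr 0 := by
    intro a; rw [inr_zero, add_zero]
  constructor
  · constructor
    · intro H
      constructor
      · intro a
        have := (mem_iff (φ a) 0).mp (by rw [← hz]; exact H a)
        exact this.1
      · intro i a
        have := ((mem_iff (φ a) 0).mp (by rw [← hz]; exact H a)).2 i
        simpa [S, φ, K] using this
    · rintro ⟨hf, hh⟩ x
      rw [hz]
      refine (mem_iff (φ x) 0).mpr ⟨hf x, fun j => ?_⟩
      simpa [S, φ, K] using hh j x
  · constructor
    · intro H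
      have key : ∀ (a : R) (v : Fin n → R),
          f.eval (φ a) ∈ S ∧ ∀ j : Fin n,
            (derivative f).eval (φ a) * φ (v j) + (h j).eval (φ a) ∈ S := by
        intro a v
        exact (mem_iff (φ a) (fun j => φ (v j))).mp (H a v)
      have hh : ∀ i, h i ∈ IntPoly R := by
        intro i a
        have := (key a 0).2 i
        simpa [S, φ, K] using this
      refine ⟨fun a => (key a 0).1, ?_, hh⟩
      intro a
      have h1 := (key a 1).2 ⟨0, hn⟩
      have h2 := hh ⟨0, hn⟩ a
      have := Ssub h1 h2
      simpa [S, φ, K] using this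
    · rintro ⟨hf, hf', hh⟩ x v
      refine (mem_iff (φ x) (fun j => φ (v j))).mpr ⟨hf x, fun j => ?_⟩
      exact Sadd (Smul (hf' x) ⟨v j, rfl⟩) (hh j x)
end
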